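/- A conjunction in the double category MonCat is precisely a doctrinal adjunction: given an adjunction F ⊣ G between monoidal categories where F is oplax monoidal and G is lax monoidal, the adjunction unit and counit are a conjunction unit and counit in MonCat (i.e., are 2-cells of MonCat) if and only if the oplax structure maps of F are the mates of the lax structure maps of G under the adjunction. -/

import Mathlib

open CategoryTheory MonoidalCategory Functor

/-- Doctrinal adjunction: given an adjunction `F ⊣ G` between monoidal
categories, with `F` oplax monoidal and `G` lax monoidal, the unit and counit
are 2-cells of the double category `MonCat` (i.e. are compatible with the
lax/oplax structure maps) if and only if the oplax structure maps of `F` are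
the mates of the lax structure maps of `G` under the adjunction.  Thus a
conjunction in `MonCat` is precisely a doctrinal adjunction. -/
theorem doctrinal_adjunction {A : Type u₁} {B : Type u₂}
    [Category.{v₁} A] [Category.{v₂} B]
    [MonoidalCategory A] [MonoidalCategory B]
    (F : A ⥤ B) (G : B ⥤ A) [F.OplaxMonoidal] [G.LaxMonoidal]
    (adj : F ⊣ G) :
    ( -- the unit is a 2-cell of `MonCat`
      (∀ x y : A,
        adj.unit.app (x ⊗ y) ≫ G.map (OplaxMonoidal.δ F x y) =
          (adj.unit.app x ⊗ₘ adj.unit.app y) ≫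
            LaxMonoidal.μ G (F.obj x) (F.obj y)) ∧
      (adj.unit.app (𝟙_ A) ≫ G.map (OplaxMonoidal.η F) = LaxMonoidal.ε G) ∧
      -- the counit is a 2-cell of `MonCat`
      (∀ x y : B,
        F.map (LaxMonoidal.μ G x y) ≫ adj.counit.app (x ⊗ y) =
          OplaxMonoidal.δ F (G.obj x) (G.obj y) ≫
            (adj.counit.app x ⊗ₘ adj.counit.app y)) ∧
      (F.map (LaxMonoidal.ε G) ≫ adj.counit.app (𝟙_ B) = OplaxMonoidal.η F) )
    ↔
    ( -- the oplax structure maps of `F` are the mates of the lax structure maps of `G`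
      (∀ x y : A,
        OplaxMonoidal.δ F x y =
          F.map (adj.unit.app x ⊗ₘ adj.unit.app y) ≫
            F.map (LaxMonoidal.μ G (F.obj x) (F.obj y)) ≫
              adj.counit.app (F.obj x ⊗ F.obj y)) ∧
      (OplaxMonoidal.η F = F.map (LaxMonoidal.ε G) ≫ adj.counit.app (𝟙_ B)) ) := by
  constructor
  · rintro ⟨h1, h2, h3, h4⟩
    refine ⟨fun x y => ?_, h4.symm⟩
    have h := OplaxMonoidal.δ_natural_assoc F (adj.unit.app x) (adj.unit.app y)
      (adj.counit.app (F.obj x) ⊗ₘ adj.counit.app (F.obj y))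
    simp only [Functor.comp_obj] at h
    rw [h3, ← h, tensorHom_comp_tensorHom]
    simp
  · rintro ⟨hd, he⟩
    refine ⟨fun x y => ?_, ?_, fun x y => ?_, he.symm⟩
    · simp [hd]
    · simp [he]
    · rw [hd]
      simp only [Category.assoc]
      rw [← adj.counit_naturality, ← F.map_comp_assoc, ← F.map_comp_assoc,
        Category.assoc, ← LaxMonoidal.μ_natural G, tensorHom_comp_tensorHom_assoc,
        adj.right_triangle_components, adj.right_triangle_components]
      simp only [Functor.id_obj, MonoidalCategory.id_tensorHom_id, Category.id_comp]
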